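/- Let A be the n×n matrix with A_{ij} = min(i,j), and for k ∈ {1,…,n} let θ_k = (2k-1)π/(2n+1). Then the vector x^{(k)} with entries x^{(k)}_r = sin(r θ_k) satisfies A x^{(k)} = λ_k x^{(k)} where λ_k = 1/(2(1 - cos θ_k)) = 1/(4 sin²(θ_k/2)). -/

import Mathlib

open Matrix Real

private lemma abel_min (m n : ℕ) (hmn : m ≤ n) (e : ℕ → ℝ) :
    ∑ s ∈ Finset.range n, ((min m (s + 1) : ℕ) : ℝ) * (e s - e (s + 1)) =
      (∑ s ∈ Finset.range m, e s) - m * e n := by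
  have h1 : ∀ s : ℕ, ((min m (s + 1) : ℕ) : ℝ) * (e s - e (s + 1)) =
      (((min m s : ℕ) : ℝ) * e s - ((min m (s + 1) : ℕ) : ℝ) * e (s + 1)) +
        (if s < m then e s else 0) := by
    intro s
    rcases lt_or_ge s m with h | h
    · rw [min_eq_right (by omega : s + 1 ≤ m)]
      rw [min_eq_right (le_of_lt h), if_pos h]
      push_cast
      ring
    · rw [min_eq_left (by omega : m ≤ s + 1), min_eq_left h, if_neg (not_lt.mpr h)]
      ring
  rw [Finset.sum_congr rfl fun s _ => h1 s, Finset.sum_add_distrib,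
    Finset.sum_range_sub' (fun s => ((min m s : ℕ) : ℝ) * e s) n]
  have h2 : ∑ s ∈ Finset.range n, (if s < m then e s else 0) = ∑ s ∈ Finset.range m, e s := by
    rw [← Finset.sum_subset (Finset.range_subset_range.mpr hmn)
      (fun x _ hx => by rw [if_neg (by simpa using hx)])]
    exact Finset.sum_congr rfl fun s hs => if_pos (Finset.mem_range.mp hs)
  rw [h2]
  simp [min_eq_left hmn]
  ring

theorem sine_eigenvectors_of_min_matrix (n : ℕ) (hn : 0 < n)
    (A : Matrix (Fin n) (Fin n) ℝ)
    (hA : ∀ i j : Fin n, A i j = min (i.1 + 1) (j.1 + 1))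
    (k : Fin n) :
    let θ : ℝ := (2 * (k.1 + 1) - 1) * Real.pi / (2 * n + 1)
    let x : Fin n → ℝ := fun r => Real.sin ((r.1 + 1) * θ)
    let lam : ℝ := 1 / (2 * (1 - Real.cos θ))
    A.mulVec x = lam • x ∧ lam = 1 / (4 * Real.sin (θ / 2) ^ 2) := by
  intro θ x lam
  set K := k.1 with hK
  have hθ : θ = (2 * K + 1) * Real.pi / (2 * n + 1) := by
    simp only [θ]; ring
  have hKn : K < n := k.2
  have hn1 : (0:ℝ) < 2 * n + 1 := by positivity
  -- 0 < θ < π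
  have hθpos : 0 < θ := by
    rw [hθ]
    apply div_pos (by positivity) hn1
  have hθlt : θ < Real.pi := by
    rw [hθ, div_lt_iff₀ hn1]
    have : (2 * K + 1 : ℝ) < 2 * n + 1 := by
      norm_num
      exact_mod_cast hKn
    nlinarith [Real.pi_pos]
  have hcos : Real.cos θ < 1 := by
    have := Real.cos_lt_cos_of_nonneg_of_le_pi (le_refl (0:ℝ)) (le_of_lt hθlt) hθpos
    simpa using this
  have hc : 2 * (1 - Real.cos θ) ≠ 0 := by nlinarith
  -- boundary: sin ((n+1) θ) = sin (n θ)
  have hbdy : Real.sin ((n + 1) * θ) = Real.sin (n * θ) := by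
    have harg : ((n : ℝ) + 1) * θ = (Real.pi - n * θ) + (K : ℤ) * (2 * Real.pi) := by
      have h21 : (2 * (n:ℝ) + 1) * θ = (2 * K + 1) * Real.pi := by
        rw [hθ]; field_simp
      push_cast
      nlinarith [h21]
    rw [harg, Real.sin_add_int_mul_two_pi, Real.sin_pi_sub]
  -- the trig recurrence
  set e : ℕ → ℝ := fun s => Real.sin ((s + 1) * θ) - Real.sin (s * θ) with he
  have hrec : ∀ s : ℕ, (2 * (1 - Real.cos θ)) * Real.sin ((s + 1) * θ) = e s - e (s + 1) := by
    intro s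
    have h1 : Real.sin ((s + 1) * θ + θ) =
        Real.sin ((s + 1) * θ) * Real.cos θ + Real.cos ((s + 1) * θ) * Real.sin θ :=
      Real.sin_add _ _
    have h2 : Real.sin ((s + 1) * θ - θ) =
        Real.sin ((s + 1) * θ) * Real.cos θ - Real.cos ((s + 1) * θ) * Real.sin θ :=
      Real.sin_sub _ _
    have e1 : ((s:ℝ) + 1 + 1) * θ = (s + 1) * θ + θ := by ring
    have e2 : ((s:ℝ)) * θ = (s + 1) * θ - θ := by ring
    simp only [he]
    push_cast
    rw [e1, e2, h1, h2]
    ring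
  have hen : e n = 0 := by
    simp only [he]
    rw [hbdy]; ring
  constructor
  · funext i
    have hmain : (2 * (1 - Real.cos θ)) * ∑ j : Fin n, A i j * x j =
        Real.sin ((i.1 + 1) * θ) := by
      rw [Finset.mul_sum]
      have hterm : ∀ j : Fin n, (2 * (1 - Real.cos θ)) * (A i j * x j) =
          ((min (i.1 + 1) (j.1 + 1) : ℕ) : ℝ) * (e j.1 - e (j.1 + 1)) := by
        intro j
        rw [hA i j, ← hrec j.1]
        simp only [x]
        push_cast
        ring
      rw [Finset.sum_congr rfl fun j _ => hterm j]
      rw [Fin.sum_univ_eq_sum_range (fun s => ((min (i.1 + 1) (s + 1) : ℕ) : ℝ) * (e s - e (s + 1))) n]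
      rw [abel_min (i.1 + 1) n (by omega) e, hen]
      have htel : ∑ s ∈ Finset.range (i.1 + 1), e s = Real.sin ((i.1 + 1) * θ) := by
        have := Finset.sum_range_sub (fun s => Real.sin (s * θ)) (i.1 + 1)
        simp only [he]
        push_cast at this ⊢
        rw [this]
        simp
      rw [htel]; ring
    show ∑ j : Fin n, A i j * x j = lam * x i
    have : ∑ j : Fin n, A i j * x j = (2 * (1 - Real.cos θ))⁻¹ * Real.sin ((i.1 + 1) * θ) := by
      rw [eq_inv_mul_iff_mul_eq₀ hc]
      exact hmain
    rw [this]
    simp only [lam, x]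
    rw [one_div]
  · simp only [lam]
    congr 1
    have h1 : Real.cos θ = Real.cos (2 * (θ / 2)) := by ring_nf
    have h2 := Real.cos_two_mul (θ / 2)
    have h3 := Real.sin_sq_add_cos_sq (θ / 2)
    nlinarith [h1, h2, h3]
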